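/- Consider a treap on n distinct elements with distinct priorities: the binary tree in which the root is the minimum-priority element, and the left/right subtrees are recursively treaps on the elements before/after the root in the sequence order. If priorities are assigned uniformly at random (a uniformly random permutation), then the expected depth of the treap is O(log n); moreover the depth is O(log n) with probability at least 1 − 1/n. -/
import Mathlib

/-- The depth (number of ancestors, including itself) of element `i` in the treap on
`Fin n` with priorities `σ`: `j` is an ancestor of `i` iff `σ j` is minimal among the
priorities of the interval between `i` and `j`. -/
noncomputable def treapDepth (n : ℕ) (σ : Equiv.Perm (Fin n)) (i : Fin n) : ℕ :=
  Nat.card {j : Fin n // ∀ k : Fin n, min i j ≤ k → k ≤ max i j → σ j ≤ σ k}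

/-- The depth of the treap on `Fin n` with priorities `σ`. -/
noncomputable def treapMaxDepth (n : ℕ) (σ : Equiv.Perm (Fin n)) : ℕ :=
  Finset.univ.sup (treapDepth n σ)

namespace TreapAux

variable {n : ℕ}

def Anc (i : Fin n) (σ : Equiv.Perm (Fin n)) (j : Fin n) : Prop :=
  ∀ k : Fin n, min i j ≤ k → k ≤ max i j → σ j ≤ σ k

instance (i : Fin n) (σ : Equiv.Perm (Fin n)) : DecidablePred (Anc i σ) := by
  unfold Anc; infer_instance

def dd (i j : Fin n) : ℕ := (max i j).val - (min i j).val

def ES (i : Fin n) (T : Finset (Fin n)) : Finset (Equiv.Perm (Fin n)) :=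
  Finset.univ.filter fun σ => ∀ j ∈ T, Anc i σ j

lemma val_min (a b : Fin n) : (min a b).val = min a.val b.val := by
  rcases le_total a b with h | h
  · rw [min_eq_left h, min_eq_left (Fin.le_def.mp h)]
  · rw [min_eq_right h, min_eq_right (Fin.le_def.mp h)]

lemma val_max (a b : Fin n) : (max a b).val = max a.val b.val := by
  rcases le_total a b with h | h
  · rw [max_eq_right h, max_eq_right (Fin.le_def.mp h)]
  · rw [max_eq_left h, max_eq_left (Fin.le_def.mp h)]

lemma min_point (i j₀ k : Fin n) (σ : Equiv.Perm (Fin n))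
    (hk1 : min i j₀ ≤ k) (hk2 : k ≤ max i j₀) (hσ : Anc i σ j₀) :
    ∀ m, min i j₀ ≤ m → m ≤ max i j₀ →
      (σ * Equiv.swap j₀ k) k ≤ (σ * Equiv.swap j₀ k) m := by
  intro m h1 h2
  rw [Equiv.Perm.mul_apply, Equiv.Perm.mul_apply, Equiv.swap_apply_right]
  rcases eq_or_ne m j₀ with rfl | hm0
  · rw [Equiv.swap_apply_left]; exact hσ k hk1 hk2
  · rcases eq_or_ne m k with rfl | hmk
    · rw [Equiv.swap_apply_right]
    · rw [Equiv.swap_apply_of_ne_of_ne hm0 hmk]; exact hσ m h1 h2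

lemma anc_swap (i j₀ k j : Fin n) (σ : Equiv.Perm (Fin n))
    (hji : j ≠ i) (hj0i : j₀ ≠ i) (hjj0 : j ≠ j₀)
    (hk1 : min i j₀ ≤ k) (hk2 : k ≤ max i j₀) (hki : k ≠ i)
    (hd : dd i j₀ ≤ dd i j) (hσ : Anc i σ j) :
    Anc i (σ * Equiv.swap j₀ k) j := by
  have hji' : j.val ≠ i.val := fun h => hji (Fin.ext h)
  have hj0i' : j₀.val ≠ i.val := fun h => hj0i (Fin.ext h)
  have hki' : k.val ≠ i.val := fun h => hki (Fin.ext h)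
  have hk1' := Fin.le_def.mp hk1
  have hk2' := Fin.le_def.mp hk2
  rw [val_min] at hk1'; rw [val_max] at hk2'
  unfold dd at hd; rw [val_min, val_max, val_min, val_max] at hd
  have hjk : j ≠ k := by
    intro h; subst h; omega
  intro m h1 h2
  have h1' := Fin.le_def.mp h1; have h2' := Fin.le_def.mp h2
  rw [val_min] at h1'; rw [val_max] at h2'
  rw [Equiv.Perm.mul_apply, Equiv.Perm.mul_apply,
    Equiv.swap_apply_of_ne_of_ne hjj0 hjk]
  rcases eq_or_ne m j₀ with rfl | hm0
  · rw [Equiv.swap_apply_left]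
    exact hσ k (Fin.le_def.mpr (by rw [val_min]; omega))
      (Fin.le_def.mpr (by rw [val_max]; omega))
  · rcases eq_or_ne m k with rfl | hmk
    · rw [Equiv.swap_apply_right]
      exact hσ j₀ (Fin.le_def.mpr (by rw [val_min]; omega))
        (Fin.le_def.mpr (by rw [val_max]; omega))
    · rw [Equiv.swap_apply_of_ne_of_ne hm0 hmk]
      exact hσ m h1 h2

lemma step (i j₀ : Fin n) (T : Finset (Fin n)) (hi : i ∉ T) (hj₀ : j₀ ∈ T)
    (hmin : ∀ j ∈ T, dd i j₀ ≤ dd i j) :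
    (ES i T).card * dd i j₀ ≤ (ES i (T.erase j₀)).card := by
  classical
  have hj0i : j₀ ≠ i := fun h => hi (h ▸ hj₀)
  set A : Finset (Fin n) := (Finset.Icc (min i j₀) (max i j₀)).erase i with hA
  have hiIcc : i ∈ Finset.Icc (min i j₀) (max i j₀) :=
    Finset.mem_Icc.mpr ⟨min_le_left _ _, le_max_left _ _⟩
  have hAcard : A.card = dd i j₀ := by
    rw [hA, Finset.card_erase_of_mem hiIcc, Fin.card_Icc]
    have := Fin.le_def.mp (min_le_max (a := i) (b := j₀))
    unfold dd; omega
  have hmemA : ∀ k ∈ A, min i j₀ ≤ k ∧ k ≤ max i j₀ ∧ k ≠ i := by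
    intro k hk
    rw [hA, Finset.mem_erase, Finset.mem_Icc] at hk
    exact ⟨hk.2.1, hk.2.2, hk.1⟩
  have hmaps : ∀ p ∈ (ES i T) ×ˢ A,
      (p.1 * Equiv.swap j₀ p.2) ∈ ES i (T.erase j₀) := by
    rintro ⟨σ, k⟩ hp
    rw [Finset.mem_product] at hp
    obtain ⟨hk1, hk2, hki⟩ := hmemA k hp.2
    have hσ : ∀ j ∈ T, Anc i σ j := by
      have := hp.1; rw [ES, Finset.mem_filter] at this; exact this.2
    rw [ES, Finset.mem_filter]
    refine ⟨Finset.mem_univ _, ?_⟩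
    intro j hj
    rw [Finset.mem_erase] at hj
    exact anc_swap i j₀ k j σ (fun h => hi (h ▸ hj.2)) hj0i hj.1 hk1 hk2 hki
      (hmin j hj.2) (hσ j hj.2)
  have hinj : Set.InjOn (fun p : Equiv.Perm (Fin n) × Fin n => p.1 * Equiv.swap j₀ p.2)
      ↑((ES i T) ×ˢ A) := by
    rintro ⟨σ, k⟩ hp ⟨τ, k'⟩ hq heq
    simp only [Finset.coe_product, Set.mem_prod, Finset.mem_coe] at hp hq
    obtain ⟨hk1, hk2, hki⟩ := hmemA k hp.2
    obtain ⟨hk1', hk2', hki'⟩ := hmemA k' hq.2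
    have hσ : Anc i σ j₀ := by
      have := hp.1; rw [ES, Finset.mem_filter] at this; exact this.2 j₀ hj₀
    have hτ : Anc i τ j₀ := by
      have := hq.1; rw [ES, Finset.mem_filter] at this; exact this.2 j₀ hj₀
    simp only at heq
    have h1 : (σ * Equiv.swap j₀ k) k ≤ (σ * Equiv.swap j₀ k) k' :=
      min_point i j₀ k σ hk1 hk2 hσ k' hk1' hk2'
    have h2 : (τ * Equiv.swap j₀ k') k' ≤ (τ * Equiv.swap j₀ k') k :=
      min_point i j₀ k' τ hk1' hk2' hτ k hk1 hk2
    rw [heq] at h1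
    have hkk : k = k' := by
      have := le_antisymm h1 h2
      exact (Equiv.injective _) this
    subst hkk
    have : σ = τ := mul_right_cancel heq
    simp [this]
  have := Finset.card_le_card_of_injOn _ hmaps hinj
  rw [Finset.card_product, hAcard] at this
  exact this

end TreapAux

namespace TreapAux2
open TreapAux
variable {n : ℕ}

lemma key (i : Fin n) (T : Finset (Fin n)) (hT : i ∉ T) :
    (ES i T).card * ∏ j ∈ T, dd i j ≤ Fintype.card (Equiv.Perm (Fin n)) := by
  classical
  suffices H : ∀ m (T : Finset (Fin n)), i ∉ T → T.card = m →
      (ES i T).card * ∏ j ∈ T, dd i j ≤ Fintype.card (Equiv.Perm (Fin n)) from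
    H T.card T hT rfl
  intro m
  induction m using Nat.strong_induction_on with
  | _ m IH =>
  intro T hT hcard
  rcases T.eq_empty_or_nonempty with rfl | hne
  · simp only [Finset.prod_empty, mul_one]
    exact le_of_le_of_eq (Finset.card_filter_le _ _) Finset.card_univ
  · obtain ⟨j₀, hj₀, hminim⟩ := Finset.exists_min_image T (dd i) hne
    have hstep := step i j₀ T hT hj₀ hminim
    have hiT' : i ∉ T.erase j₀ := fun h => hT (Finset.mem_of_mem_erase h)
    have hcard' : (T.erase j₀).card < m := by
      rw [← hcard]; exact Finset.card_erase_lt_of_mem hj₀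
    have IH' := IH _ hcard' (T.erase j₀) hiT' rfl
    calc (ES i T).card * ∏ j ∈ T, dd i j
        = ((ES i T).card * dd i j₀) * ∏ j ∈ T.erase j₀, dd i j := by
          rw [← Finset.mul_prod_erase T _ hj₀]; ring
      _ ≤ (ES i (T.erase j₀)).card * ∏ j ∈ T.erase j₀, dd i j :=
          Nat.mul_le_mul_right _ hstep
      _ ≤ _ := IH'

lemma anc_self (i : Fin n) (σ : Equiv.Perm (Fin n)) : Anc i σ i := by
  intro k h1 h2
  simp only [min_self, max_self] at h1 h2
  have : k = i := le_antisymm h2 h1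
  subst this; exact le_rfl

lemma dd_pos (i j : Fin n) (h : j ≠ i) : 1 ≤ dd i j := by
  have : j.val ≠ i.val := fun hh => h (Fin.ext hh)
  unfold dd; rw [val_min, val_max]; omega

lemma dd_lt (i j : Fin n) : dd i j ≤ n - 1 := by
  have h1 := i.isLt; have h2 := j.isLt
  unfold dd; rw [val_min, val_max]; omega

lemma tele : ∀ m : ℕ, ∏ d ∈ Finset.Icc 1 m, (1 + (d:ℝ)⁻¹) = m + 1 := by
  intro m
  induction m with
  | zero => simp
  | succ m ih =>
    rw [Finset.prod_Icc_succ_top (by omega), ih]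
    have : ((m:ℝ) + 1) ≠ 0 := by positivity
    push_cast
    field_simp

lemma prod_bound (hn : 1 ≤ n) (i : Fin n) :
    ∏ j ∈ Finset.univ.erase i, (1 + (dd i j : ℝ)⁻¹) ≤ (n : ℝ) ^ 2 := by
  classical
  have hmaps : ∀ j ∈ Finset.univ.erase i, dd i j ∈ Finset.Icc 1 (n - 1) := by
    intro j hj
    rw [Finset.mem_erase] at hj
    exact Finset.mem_Icc.mpr ⟨dd_pos i j hj.1, dd_lt i j⟩
  rw [← Finset.prod_fiberwise_of_maps_to hmaps (fun j => (1 + (dd i j : ℝ)⁻¹))]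
  have hstep : ∀ d ∈ Finset.Icc 1 (n - 1),
      (∏ j ∈ (Finset.univ.erase i).filter (fun j => dd i j = d), (1 + (dd i j : ℝ)⁻¹))
        ≤ (1 + (d : ℝ)⁻¹) ^ 2 := by
    intro d hd
    have hd1 : 1 ≤ d := (Finset.mem_Icc.mp hd).1
    have hcard : ((Finset.univ.erase i).filter (fun j => dd i j = d)).card ≤ 2 := by
      have : ((Finset.univ.erase i).filter (fun j => dd i j = d)).card ≤
          (Finset.univ : Finset Bool).card := by
        apply Finset.card_le_card_of_injOn (fun j => decide (j.val < i.val))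
          (fun _ _ => Finset.mem_univ _)
        intro a ha b hb hab
        simp only [Finset.coe_filter, Set.mem_setOf_eq, Finset.mem_erase] at ha hb
        have ha2 := ha.2; have hb2 := hb.2
        unfold dd at ha2 hb2
        rw [val_min, val_max] at ha2 hb2
        have hai : a.val ≠ i.val := fun hh => ha.1.1 (Fin.ext hh)
        have hbi : b.val ≠ i.val := fun hh => hb.1.1 (Fin.ext hh)
        have : (decide (a.val < i.val)) = (decide (b.val < i.val)) := hab
        rcases Nat.lt_or_ge a.val i.val with h | h <;>
          rcases Nat.lt_or_ge b.val i.val with h' | h' <;>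
          simp_all <;> exact Fin.ext (by omega)
      simpa using this
    calc (∏ j ∈ (Finset.univ.erase i).filter (fun j => dd i j = d),
            (1 + (dd i j : ℝ)⁻¹))
        = (1 + (d:ℝ)⁻¹) ^ ((Finset.univ.erase i).filter (fun j => dd i j = d)).card := by
          rw [Finset.prod_congr rfl (fun j hj => ?_), Finset.prod_const]
          rw [Finset.mem_filter] at hj
          rw [hj.2]
      _ ≤ (1 + (d:ℝ)⁻¹) ^ 2 := by
          have h0 : (0:ℝ) ≤ (d:ℝ)⁻¹ := by positivity
          apply pow_le_pow_right₀ (by linarith) hcard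
  calc (∏ d ∈ Finset.Icc 1 (n-1), ∏ j ∈ (Finset.univ.erase i).filter (fun j => dd i j = d),
          (1 + (dd i j : ℝ)⁻¹))
      ≤ ∏ d ∈ Finset.Icc 1 (n-1), (1 + (d : ℝ)⁻¹) ^ 2 := by
        apply Finset.prod_le_prod (fun d _ => by positivity) hstep
    _ = ((n - 1 : ℕ) + 1 : ℝ) ^ 2 := by rw [Finset.prod_pow, tele]
    _ = (n : ℝ) ^ 2 := by
        congr 1
        push_cast [Nat.cast_sub hn]
        ring

lemma filter_subset_eq (i : Fin n) (T : Finset (Fin n)) :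
    (Finset.univ : Finset (Equiv.Perm (Fin n))).filter
        (fun σ : Equiv.Perm (Fin n) => T ⊆ Finset.univ.filter (Anc i σ)) = ES i (T.erase i) := by
  classical
  ext σ
  simp only [ES, Finset.mem_filter, Finset.mem_univ, true_and, Finset.subset_iff,
    Finset.mem_erase]
  constructor
  · intro h j hj; exact h hj.2
  · intro h j hj
    rcases eq_or_ne j i with heq | hne
    · rw [heq]; exact anc_self i σ
    · exact h j ⟨hne, hj⟩

lemma Ksum (hn : 1 ≤ n) (i : Fin n) :
    ∑ σ : Equiv.Perm (Fin n), (2:ℝ) ^ (Finset.univ.filter (Anc i σ)).card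
      ≤ 2 * (n:ℝ)^2 * (Fintype.card (Equiv.Perm (Fin n)) : ℝ) := by
  classical
  set N : ℝ := (Fintype.card (Equiv.Perm (Fin n)) : ℝ) with hN
  have hNpos : (0:ℝ) < N := by
    rw [hN]; exact_mod_cast Fintype.card_pos
  have step1 : ∑ σ : Equiv.Perm (Fin n), (2:ℝ) ^ (Finset.univ.filter (Anc i σ)).card
      = ∑ T ∈ (Finset.univ : Finset (Fin n)).powerset, ((ES i (T.erase i)).card : ℝ) := by
    have h2 : ∀ σ : Equiv.Perm (Fin n), (2:ℝ) ^ (Finset.univ.filter (Anc i σ)).card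
        = ∑ T ∈ (Finset.univ : Finset (Fin n)).powerset,
            if T ⊆ Finset.univ.filter (Anc i σ) then (1:ℝ) else 0 := by
      intro σ
      rw [Finset.sum_boole]
      have : (Finset.univ : Finset (Fin n)).powerset.filter
          (fun T => T ⊆ Finset.univ.filter (Anc i σ))
          = (Finset.univ.filter (Anc i σ)).powerset := by
        ext T; simp [Finset.mem_powerset]
      rw [this, Finset.card_powerset]
      push_cast; ring
    rw [Finset.sum_congr rfl (fun σ _ => h2 σ), Finset.sum_comm]
    apply Finset.sum_congr rfl
    intro T _
    rw [← filter_subset_eq i T, Finset.sum_boole]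
  have step2 : ∀ T ∈ (Finset.univ : Finset (Fin n)).powerset,
      ((ES i (T.erase i)).card : ℝ) ≤ N * ∏ j ∈ T.erase i, ((dd i j : ℝ))⁻¹ := by
    intro T _
    have hkey := key i (T.erase i) (Finset.notMem_erase i T)
    have hprodpos : (0:ℝ) < ∏ j ∈ T.erase i, (dd i j : ℝ) := by
      apply Finset.prod_pos
      intro j hj
      have := dd_pos i j (Finset.mem_erase.mp hj).1
      exact_mod_cast Nat.lt_of_lt_of_le Nat.zero_lt_one this
    have hc : ((ES i (T.erase i)).card : ℝ) * ∏ j ∈ T.erase i, (dd i j : ℝ) ≤ N := by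
      rw [hN]
      exact_mod_cast hkey
    rw [Finset.prod_inv_distrib]
    rw [← le_div_iff₀ hprodpos] at hc
    calc ((ES i (T.erase i)).card : ℝ) ≤ N / ∏ j ∈ T.erase i, (dd i j : ℝ) := hc
      _ = N * (∏ j ∈ T.erase i, (dd i j : ℝ))⁻¹ := div_eq_mul_inv _ _
  have step3 : ∑ T ∈ (Finset.univ : Finset (Fin n)).powerset,
        (N * ∏ j ∈ T.erase i, ((dd i j : ℝ))⁻¹)
      = N * (2 * ∏ j ∈ Finset.univ.erase i, (((dd i j : ℝ))⁻¹ + 1)) := by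
    rw [← Finset.mul_sum]
    congr 1
    have huniv : (Finset.univ : Finset (Fin n)) = insert i (Finset.univ.erase i) :=
      (Finset.insert_erase (Finset.mem_univ i)).symm
    conv_lhs => rw [huniv]
    rw [Finset.sum_powerset_insert (Finset.notMem_erase i _)]
    have hsimp : ∀ T ∈ (Finset.univ.erase i).powerset,
        (∏ j ∈ (insert i T).erase i, ((dd i j : ℝ))⁻¹) = ∏ j ∈ T, ((dd i j : ℝ))⁻¹ := by
      intro T hT
      have hiT : i ∉ T := fun h =>
        Finset.notMem_erase i _ ((Finset.mem_powerset.mp hT) h)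
      rw [Finset.erase_insert hiT]
    have hsimp2 : ∀ T ∈ (Finset.univ.erase i).powerset,
        (∏ j ∈ T.erase i, ((dd i j : ℝ))⁻¹) = ∏ j ∈ T, ((dd i j : ℝ))⁻¹ := by
      intro T hT
      have hiT : i ∉ T := fun h =>
        Finset.notMem_erase i _ ((Finset.mem_powerset.mp hT) h)
      rw [Finset.erase_eq_of_notMem hiT]
    rw [Finset.sum_congr rfl hsimp, Finset.sum_congr rfl hsimp2]
    rw [Finset.prod_add]
    simp only [Finset.prod_const_one, mul_one]
    ring
  calc ∑ σ : Equiv.Perm (Fin n), (2:ℝ) ^ (Finset.univ.filter (Anc i σ)).card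
      = ∑ T ∈ (Finset.univ : Finset (Fin n)).powerset, ((ES i (T.erase i)).card : ℝ) := step1
    _ ≤ ∑ T ∈ (Finset.univ : Finset (Fin n)).powerset,
          (N * ∏ j ∈ T.erase i, ((dd i j : ℝ))⁻¹) := Finset.sum_le_sum step2
    _ = N * (2 * ∏ j ∈ Finset.univ.erase i, (((dd i j : ℝ))⁻¹ + 1)) := step3
    _ ≤ N * (2 * (n:ℝ)^2) := by
        apply mul_le_mul_of_nonneg_left _ (le_of_lt hNpos)
        apply mul_le_mul_of_nonneg_left _ (by norm_num)
        calc ∏ j ∈ Finset.univ.erase i, (((dd i j : ℝ))⁻¹ + 1)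
            = ∏ j ∈ Finset.univ.erase i, (1 + ((dd i j : ℝ))⁻¹) := by
              apply Finset.prod_congr rfl; intro j _; ring
          _ ≤ (n:ℝ)^2 := prod_bound hn i
    _ = 2 * (n:ℝ)^2 * N := by ring

end TreapAux2

open TreapAux TreapAux2 Finset

/-- With uniformly random priorities, the expected depth of every element of a treap on
`n` elements is `O(log n)`, and the depth of the treap is `O(log n)` with probability at
least `1 − 1/n`. -/
theorem treap_depth_log :
    ∃ C : ℝ, 0 < C ∧ ∀ n : ℕ, 2 ≤ n →
      (∀ i : Fin n,
        (∑ σ : Equiv.Perm (Fin n), (treapDepth n σ i : ℝ)) /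
            (Fintype.card (Equiv.Perm (Fin n)) : ℝ) ≤ C * Real.log n) ∧
      1 - 1 / (n : ℝ) ≤
        (Nat.card {σ : Equiv.Perm (Fin n) //
            (treapMaxDepth n σ : ℝ) ≤ C * Real.log n} : ℝ) /
          (Fintype.card (Equiv.Perm (Fin n)) : ℝ) := by
  classical
  refine ⟨10, by norm_num, ?_⟩
  intro n hn
  set N : ℝ := (Fintype.card (Equiv.Perm (Fin n)) : ℝ) with hNdef
  have hNpos : 0 < N := by
    rw [hNdef]; exact_mod_cast Fintype.card_pos
  have hn1 : 1 ≤ n := by omega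
  have hnR : (2:ℝ) ≤ (n:ℝ) := by exact_mod_cast hn
  have hnpos : (0:ℝ) < n := by linarith
  have hlog2 : (0.6931471803:ℝ) < Real.log 2 := Real.log_two_gt_d9
  have hL2 : Real.log 2 ≤ Real.log n := Real.log_le_log (by norm_num) hnR
  have hLpos : (0:ℝ) < Real.log n := by linarith
  have depth_eq : ∀ (σ : Equiv.Perm (Fin n)) (i : Fin n),
      treapDepth n σ i = (Finset.univ.filter (Anc i σ)).card := by
    intro σ i
    rw [treapDepth, Nat.card_eq_fintype_card]
    exact Fintype.card_subtype _
  have depth_le : ∀ (σ : Equiv.Perm (Fin n)) (i : Fin n),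
      (treapDepth n σ i : ℝ) ≤ (n:ℝ) := by
    intro σ i
    rw [depth_eq]
    have : (Finset.univ.filter (Anc i σ)).card ≤ n := by
      calc (Finset.univ.filter (Anc i σ)).card ≤ (Finset.univ : Finset (Fin n)).card :=
            Finset.card_filter_le _ _
        _ = n := by simp
    exact_mod_cast this
  have hK : ∀ i : Fin n,
      ∑ σ : Equiv.Perm (Fin n), (2:ℝ) ^ (treapDepth n σ i) ≤ 2*(n:ℝ)^2*N := by
    intro i
    have := Ksum hn1 i
    rw [hNdef]
    calc ∑ σ : Equiv.Perm (Fin n), (2:ℝ) ^ (treapDepth n σ i)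
        = ∑ σ : Equiv.Perm (Fin n), (2:ℝ) ^ (Finset.univ.filter (Anc i σ)).card := by
          refine Finset.sum_congr rfl fun σ _ => ?_
          rw [depth_eq]
      _ ≤ _ := this
  have hmarkov : ∀ (i : Fin n) (a : ℝ),
      ((Finset.univ.filter
          (fun σ : Equiv.Perm (Fin n) => a < (treapDepth n σ i : ℝ))).card : ℝ)
        * (2:ℝ) ^ a ≤ 2*(n:ℝ)^2*N := by
    intro i a
    set B := Finset.univ.filter
      (fun σ : Equiv.Perm (Fin n) => a < (treapDepth n σ i : ℝ)) with hBdef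
    calc (B.card : ℝ) * (2:ℝ) ^ a = ∑ _σ ∈ B, (2:ℝ) ^ a := by
          rw [Finset.sum_const, nsmul_eq_mul]
      _ ≤ ∑ σ ∈ B, (2:ℝ) ^ (treapDepth n σ i) := by
          refine Finset.sum_le_sum fun σ hσ => ?_
          have hlt : a < (treapDepth n σ i : ℝ) := (Finset.mem_filter.mp hσ).2
          calc (2:ℝ) ^ a ≤ (2:ℝ) ^ ((treapDepth n σ i : ℕ) : ℝ) :=
                Real.rpow_le_rpow_of_exponent_le one_le_two (le_of_lt hlt)
            _ = (2:ℝ) ^ (treapDepth n σ i) := Real.rpow_natCast 2 _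
      _ ≤ ∑ σ : Equiv.Perm (Fin n), (2:ℝ) ^ (treapDepth n σ i) := by
          refine Finset.sum_le_sum_of_subset_of_nonneg (Finset.filter_subset _ _)
            fun σ _ _ => by positivity
      _ ≤ 2*(n:ℝ)^2*N := hK i
  have hpow : ∀ (c : ℝ) (k : ℕ), (k:ℝ) ≤ c * Real.log 2 →
      (n:ℝ)^(k:ℕ) ≤ (2:ℝ) ^ (c * Real.log n) := by
    intro c k hk
    have h1 : (2:ℝ) ^ (c * Real.log n) = (n:ℝ) ^ (c * Real.log 2) := by
      rw [Real.rpow_def_of_pos (by norm_num : (0:ℝ) < 2),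
        Real.rpow_def_of_pos hnpos]
      ring_nf
    rw [h1, ← Real.rpow_natCast (n:ℝ) k]
    exact Real.rpow_le_rpow_of_exponent_le (by linarith) hk
  have hBi : ∀ (i : Fin n) (c : ℝ) (k : ℕ), (k:ℝ) ≤ c * Real.log 2 →
      ((Finset.univ.filter
          (fun σ : Equiv.Perm (Fin n) =>
            c * Real.log n < (treapDepth n σ i : ℝ))).card : ℝ) * (n:ℝ)^k
        ≤ 2*(n:ℝ)^2*N := by
    intro i c k hk
    calc ((Finset.univ.filter
          (fun σ : Equiv.Perm (Fin n) =>
            c * Real.log n < (treapDepth n σ i : ℝ))).card : ℝ) * (n:ℝ)^k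
        ≤ ((Finset.univ.filter
          (fun σ : Equiv.Perm (Fin n) =>
            c * Real.log n < (treapDepth n σ i : ℝ))).card : ℝ) * (2:ℝ)^(c * Real.log n) :=
          mul_le_mul_of_nonneg_left (hpow c k hk) (by positivity)
      _ ≤ 2*(n:ℝ)^2*N := hmarkov i _
  constructor
  · -- expectation bound
    intro i
    rw [div_le_iff₀ hNpos]
    set B := Finset.univ.filter
      (fun σ : Equiv.Perm (Fin n) => 5 * Real.log n < (treapDepth n σ i : ℝ)) with hBdef
    have hBcard : (B.card : ℝ) * (n:ℝ)^3 ≤ 2*(n:ℝ)^2*N := by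
      refine hBi i 5 3 ?_
      push_cast
      nlinarith
    have hBn : (B.card : ℝ) * (n:ℝ) ≤ 2 * N := by
      have h3 : (0:ℝ) < (n:ℝ)^3 := by positivity
      refine le_of_mul_le_mul_right ?_ h3
      calc (B.card : ℝ) * (n:ℝ) * (n:ℝ)^3 = ((B.card : ℝ) * (n:ℝ)^3) * (n:ℝ) := by ring
        _ ≤ (2*(n:ℝ)^2*N) * (n:ℝ) := mul_le_mul_of_nonneg_right hBcard (by positivity)
        _ = 2 * N * (n:ℝ)^3 := by ring
    have hsplit := Finset.sum_filter_add_sum_filter_not Finset.univ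
      (fun σ : Equiv.Perm (Fin n) => 5 * Real.log n < (treapDepth n σ i : ℝ))
      (fun σ => (treapDepth n σ i : ℝ))
    have h1 : ∑ σ ∈ B, (treapDepth n σ i : ℝ) ≤ (B.card : ℝ) * (n:ℝ) := by
      calc ∑ σ ∈ B, (treapDepth n σ i : ℝ) ≤ ∑ _σ ∈ B, (n:ℝ) :=
            Finset.sum_le_sum fun σ _ => depth_le σ i
        _ = (B.card : ℝ) * (n:ℝ) := by rw [Finset.sum_const, nsmul_eq_mul]
    have h2 : ∑ σ ∈ Finset.univ.filter
        (fun σ : Equiv.Perm (Fin n) => ¬ (5 * Real.log n < (treapDepth n σ i : ℝ))),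
        (treapDepth n σ i : ℝ) ≤ N * (5 * Real.log n) := by
      calc ∑ σ ∈ Finset.univ.filter
            (fun σ : Equiv.Perm (Fin n) => ¬ (5 * Real.log n < (treapDepth n σ i : ℝ))),
            (treapDepth n σ i : ℝ)
          ≤ ∑ _σ ∈ Finset.univ.filter
            (fun σ : Equiv.Perm (Fin n) => ¬ (5 * Real.log n < (treapDepth n σ i : ℝ))),
            (5 * Real.log n) := by
            refine Finset.sum_le_sum fun σ hσ => ?_
            exact not_lt.mp (Finset.mem_filter.mp hσ).2
        _ = ((Finset.univ.filter
            (fun σ : Equiv.Perm (Fin n) => ¬ (5 * Real.log n < (treapDepth n σ i : ℝ)))).card : ℝ)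
              * (5 * Real.log n) := by rw [Finset.sum_const, nsmul_eq_mul]
        _ ≤ N * (5 * Real.log n) := by
            refine mul_le_mul_of_nonneg_right ?_ (by positivity)
            rw [hNdef]
            exact_mod_cast Finset.card_le_card (Finset.filter_subset _ _) |>.trans
              (le_of_eq Finset.card_univ)
    calc ∑ σ : Equiv.Perm (Fin n), (treapDepth n σ i : ℝ)
        = (∑ σ ∈ B, (treapDepth n σ i : ℝ)) + ∑ σ ∈ Finset.univ.filter
            (fun σ : Equiv.Perm (Fin n) => ¬ (5 * Real.log n < (treapDepth n σ i : ℝ))),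
            (treapDepth n σ i : ℝ) := hsplit.symm
      _ ≤ (B.card : ℝ) * (n:ℝ) + N * (5 * Real.log n) := add_le_add h1 h2
      _ ≤ 2 * N + N * (5 * Real.log n) := by linarith
      _ ≤ 10 * Real.log n * N := by nlinarith
  · -- tail bound
    set P : Equiv.Perm (Fin n) → Prop :=
      fun σ => (treapMaxDepth n σ : ℝ) ≤ 10 * Real.log n with hPdef
    set bad := Finset.univ.filter (fun σ : Equiv.Perm (Fin n) => ¬ P σ) with hbaddef
    have hsub : bad ⊆ Finset.univ.biUnion (fun i : Fin n => Finset.univ.filter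
        (fun σ : Equiv.Perm (Fin n) => 10 * Real.log n < (treapDepth n σ i : ℝ))) := by
      intro σ hσ
      have hσ2 : ¬ P σ := (Finset.mem_filter.mp hσ).2
      obtain ⟨i, _, hi⟩ := Finset.exists_mem_eq_sup (Finset.univ : Finset (Fin n))
        ⟨(⟨0, by omega⟩ : Fin n), Finset.mem_univ _⟩ (treapDepth n σ)
      refine Finset.mem_biUnion.mpr ⟨i, Finset.mem_univ _,
        Finset.mem_filter.mpr ⟨Finset.mem_univ _, ?_⟩⟩
      have hmx : (treapMaxDepth n σ : ℝ) = (treapDepth n σ i : ℝ) := by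
        rw [treapMaxDepth, hi]
      rw [← hmx]
      exact not_le.mp hσ2
    have hbadcard : (bad.card : ℝ) * (n:ℝ)^6 ≤ (n:ℝ) * (2*(n:ℝ)^2*N) := by
      have h1 : (bad.card : ℝ) ≤ ∑ i : Fin n, ((Finset.univ.filter
          (fun σ : Equiv.Perm (Fin n) =>
            10 * Real.log n < (treapDepth n σ i : ℝ))).card : ℝ) := by
        have := (Finset.card_le_card hsub).trans (Finset.card_biUnion_le)
        exact_mod_cast this
      calc (bad.card : ℝ) * (n:ℝ)^6
          ≤ (∑ i : Fin n, ((Finset.univ.filter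
              (fun σ : Equiv.Perm (Fin n) =>
                10 * Real.log n < (treapDepth n σ i : ℝ))).card : ℝ)) * (n:ℝ)^6 :=
            mul_le_mul_of_nonneg_right h1 (by positivity)
        _ = ∑ i : Fin n, ((Finset.univ.filter
              (fun σ : Equiv.Perm (Fin n) =>
                10 * Real.log n < (treapDepth n σ i : ℝ))).card : ℝ) * (n:ℝ)^6 :=
            Finset.sum_mul _ _ _
        _ ≤ ∑ _i : Fin n, 2*(n:ℝ)^2*N :=
            Finset.sum_le_sum fun i _ => hBi i 10 6 (by push_cast; nlinarith)
        _ = (n:ℝ) * (2*(n:ℝ)^2*N) := by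
            rw [Finset.sum_const, nsmul_eq_mul]; simp
    have hbadN : (bad.card : ℝ) * (n:ℝ) ≤ N := by
      have h6 : (0:ℝ) < (n:ℝ)^6 := by positivity
      refine le_of_mul_le_mul_right ?_ h6
      calc (bad.card : ℝ) * (n:ℝ) * (n:ℝ)^6 = ((bad.card : ℝ) * (n:ℝ)^6) * (n:ℝ) := by ring
        _ ≤ ((n:ℝ) * (2*(n:ℝ)^2*N)) * (n:ℝ) := mul_le_mul_of_nonneg_right hbadcard (by positivity)
        _ = 2 * (n:ℝ)^4 * N := by ring
        _ ≤ N * (n:ℝ)^6 := by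
            have h4 : (0:ℝ) ≤ (n:ℝ)^4 := by positivity
            have hsq : (2:ℝ) ≤ (n:ℝ)^2 := by nlinarith
            nlinarith [mul_nonneg (le_of_lt hNpos)
              (mul_nonneg h4 (by linarith : (0:ℝ) ≤ (n:ℝ)^2 - 2))]
    have hgood : (Nat.card {σ : Equiv.Perm (Fin n) //
        (treapMaxDepth n σ : ℝ) ≤ 10 * Real.log n} : ℝ)
        = ((Finset.univ.filter P).card : ℝ) := by
      rw [Nat.card_eq_fintype_card]
      norm_cast
      exact Fintype.card_subtype _
    have hsum : ((Finset.univ.filter P).card : ℝ) + (bad.card : ℝ) = N := by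
      rw [hNdef, hbaddef]
      exact_mod_cast Finset.card_filter_add_card_filter_not
        (s := (Finset.univ : Finset (Equiv.Perm (Fin n)))) P
    rw [hgood, le_div_iff₀ hNpos]
    have hdivn : (bad.card : ℝ) ≤ N / (n:ℝ) := by
      rw [le_div_iff₀ hnpos]; exact hbadN
    have : (1 - 1/(n:ℝ)) * N = N - N / (n:ℝ) := by ring
    rw [this]
    linarith
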